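/- arXiv:2406.00220 — 3 statements merged into one kernel-verified Lean document; each statement's English description precedes it below -/
import Mathlib

section
/- For every v = (v₁,v₂,v₃) ∈ ℝ³ with v₃² < 1, the Lie bracket of the vector fields e₄ and e₅ satisfies [e₄, e₅](v) = (v₃/√(1−v₃²)) · e₅(v). -/
/-- The Lie bracket of two vector fields on a normed space:
`[V,W](x) = DW(x)·V(x) − DV(x)·W(x)`. -/
noncomputable def lieBracket {E : Type*} [NormedAddCommGroup E] [NormedSpace ℝ E]
    (V W : E → E) : E → E :=
  fun x => fderiv ℝ W x (V x) - fderiv ℝ V x (W x)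

/-- `e₄(v) = (1/√(1−v₃²))·(−v₃v₁, −v₃v₂, 1−v₃²)`. -/
noncomputable def e₄ (v : Fin 3 → ℝ) : Fin 3 → ℝ :=
  (Real.sqrt (1 - (v 2) ^ 2))⁻¹ • ![-(v 2) * v 0, -(v 2) * v 1, 1 - (v 2) ^ 2]

/-- `e₅(v) = (1/√(1−v₃²))·(−v₂, v₁, 0)`. -/
noncomputable def e₅ (v : Fin 3 → ℝ) : Fin 3 → ℝ :=
  (Real.sqrt (1 - (v 2) ^ 2))⁻¹ • ![-(v 1), v 0, 0]

/-- For every `v ∈ ℝ³` with `v₃² < 1`,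
`[e₄, e₅](v) = (v₃/√(1−v₃²)) · e₅(v)`. -/
theorem statement3 (v : Fin 3 → ℝ) (hv : (v 2) ^ 2 < 1) :
    lieBracket e₄ e₅ v = (v 2 / Real.sqrt (1 - (v 2) ^ 2)) • e₅ v := by
  have hs0 : (0:ℝ) < 1 - v 2 ^ 2 := by nlinarith
  have hs : 0 < Real.sqrt (1 - v 2 ^ 2) := Real.sqrt_pos.2 hs0
  have hs2 : Real.sqrt (1 - v 2 ^ 2) ^ 2 = 1 - v 2 ^ 2 := Real.sq_sqrt hs0.le
  -- derivative of the scalar factor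
  have hF : HasFDerivAt (fun w : Fin 3 → ℝ => (Real.sqrt (1 - w 2 ^ 2))⁻¹)
      ((v 2 / Real.sqrt (1 - v 2 ^ 2) ^ 3) • (ContinuousLinearMap.proj 2 : (Fin 3 → ℝ) →L[ℝ] ℝ)) v := by
    have h1 : HasDerivAt (fun x : ℝ => 1 - x ^ 2) (0 - (2:ℕ) * v 2 ^ 1) (v 2) :=
      (hasDerivAt_const _ 1).sub (hasDerivAt_pow 2 (v 2))
    have h2 : HasDerivAt (fun x : ℝ => (Real.sqrt (1 - x ^ 2))⁻¹)
        (-((0 - (2:ℕ) * v 2 ^ 1 : ℝ) / (2 * Real.sqrt (1 - v 2 ^ 2))) / Real.sqrt (1 - v 2 ^ 2) ^ 2)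
        (v 2) := (h1.sqrt hs0.ne').inv hs.ne'
    have h3 := h2.comp_hasFDerivAt v (hasFDerivAt_apply (𝕜 := ℝ) 2 v)
    have key : v 2 / Real.sqrt (1 - v 2 ^ 2) ^ 3 = -((0 - (2:ℕ) * v 2 ^ 1 : ℝ) / (2 * Real.sqrt (1 - v 2 ^ 2))) / Real.sqrt (1 - v 2 ^ 2) ^ 2 := by
      field_simp
      ring
    rw [key]
    exact h3
  -- the linear vector part of e₅
  set L : (Fin 3 → ℝ) →L[ℝ] (Fin 3 → ℝ) :=
    ContinuousLinearMap.pi ![-(ContinuousLinearMap.proj 1), ContinuousLinearMap.proj 0, 0] with hLdef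
  have hL : ∀ w : Fin 3 → ℝ, L w = ![-(w 1), w 0, 0] := by
    intro w; funext i; fin_cases i <;>
      simp [hLdef, ContinuousLinearMap.pi_apply, ContinuousLinearMap.neg_apply,
        ContinuousLinearMap.proj_apply]
  have hLd : HasFDerivAt (fun w : Fin 3 → ℝ => ![-(w 1), w 0, 0]) L v := by
    have h := L.hasFDerivAt (x := v)
    have : (⇑L : (Fin 3 → ℝ) → (Fin 3 → ℝ)) = fun w => ![-(w 1), w 0, 0] := funext hL
    rwa [this] at h
  have he₅ : HasFDerivAt e₅
      ((Real.sqrt (1 - v 2 ^ 2))⁻¹ • L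
        + ((v 2 / Real.sqrt (1 - v 2 ^ 2) ^ 3) •
            (ContinuousLinearMap.proj 2 : (Fin 3 → ℝ) →L[ℝ] ℝ)).smulRight ![-(v 1), v 0, 0]) v :=
    hF.smul hLd
  -- the vector part of e₄ and its derivative
  set d0 : (Fin 3 → ℝ) →L[ℝ] ℝ :=
    -(v 2 • ContinuousLinearMap.proj 0) + -(v 0 • ContinuousLinearMap.proj 2) with hd0
  set d1 : (Fin 3 → ℝ) →L[ℝ] ℝ :=
    -(v 2 • ContinuousLinearMap.proj 1) + -(v 1 • ContinuousLinearMap.proj 2) with hd1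
  set d2 : (Fin 3 → ℝ) →L[ℝ] ℝ :=
    -(v 2 • ContinuousLinearMap.proj 2) + -(v 2 • ContinuousLinearMap.proj 2) with hd2
  have hM : HasFDerivAt (fun w : Fin 3 → ℝ => ![-(w 2) * w 0, -(w 2) * w 1, 1 - w 2 ^ 2])
      (ContinuousLinearMap.pi ![d0, d1, d2]) v := by
    apply hasFDerivAt_pi''
    intro i
    rw [ContinuousLinearMap.proj_pi]
    fin_cases i
    · have h := ((hasFDerivAt_apply (𝕜 := ℝ) 2 v).neg).mul (hasFDerivAt_apply (𝕜 := ℝ) 0 v)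
      simp at h ⊢
      exact h
    · have h := ((hasFDerivAt_apply (𝕜 := ℝ) 2 v).neg).mul (hasFDerivAt_apply (𝕜 := ℝ) 1 v)
      simp at h ⊢
      exact h
    · have h := (hasFDerivAt_const (1:ℝ) v).sub
        ((hasFDerivAt_apply (𝕜 := ℝ) 2 v).mul (hasFDerivAt_apply (𝕜 := ℝ) 2 v))
      have heq : (fun w : Fin 3 → ℝ => 1 - w 2 * w 2) = fun w => 1 - w 2 ^ 2 := by
        funext w; ring
      simp at h ⊢
      convert h using 1
      funext w; simp; ring
  have he₄ : HasFDerivAt e₄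
      ((Real.sqrt (1 - v 2 ^ 2))⁻¹ • ContinuousLinearMap.pi ![d0, d1, d2]
        + ((v 2 / Real.sqrt (1 - v 2 ^ 2) ^ 3) •
            (ContinuousLinearMap.proj 2 : (Fin 3 → ℝ) →L[ℝ] ℝ)).smulRight
          ![-(v 2) * v 0, -(v 2) * v 1, 1 - v 2 ^ 2]) v :=
    hF.smul hM
  show fderiv ℝ e₅ v (e₄ v) - fderiv ℝ e₄ v (e₅ v) = (v 2 / Real.sqrt (1 - v 2 ^ 2)) • e₅ v
  rw [he₅.fderiv, he₄.fderiv]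
  funext i
  fin_cases i <;>
    simp [e₄, e₅, hL, hd0, hd1, hd2, ContinuousLinearMap.add_apply,
      ContinuousLinearMap.smul_apply, ContinuousLinearMap.smulRight_apply,
      ContinuousLinearMap.proj_apply, ContinuousLinearMap.neg_apply,
      ContinuousLinearMap.sub_apply, Pi.smul_apply, smul_eq_mul] <;>
    field_simp
  · linear_combination (v 2 * v 1) * hs2
  · linear_combination (-(v 2 * v 0)) * hs2
end

section
/- Let x₃ ∈ ℝ and v = (v₁,v₂,v₃) ∈ ℝ³ with v₁² + v₂² + v₃² = 1 and v₃² ≠ 1, and set α = −v₃v₁ sin x₃ + v₃v₂ cos x₃. Then (−v₃ sin x₃ − α v₁, v₃ cos x₃ − α v₂, −α v₃) = (v₃²(v₁ sin x₃ − v₂ cos x₃)/√(1−v₃²)) · e₄(v) + (v₃(v₂ sin x₃ + v₁ cos x₃)/√(1−v₃²)) · e₅(v). -/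
/-- For `x₃ ∈ ℝ` and unit `v ∈ ℝ³` with `v₃² ≠ 1`, and
`α = −v₃v₁ sin x₃ + v₃v₂ cos x₃`, one has
`(−v₃ sin x₃ − α v₁, v₃ cos x₃ − α v₂, −α v₃)
  = (v₃²(v₁ sin x₃ − v₂ cos x₃)/√(1−v₃²))·e₄(v)
    + (v₃(v₂ sin x₃ + v₁ cos x₃)/√(1−v₃²))·e₅(v)`. -/
theorem statement4 (x₃ : ℝ) (v : Fin 3 → ℝ) (α : ℝ)
    (hα : α = -(v 2) * v 0 * Real.sin x₃ + v 2 * v 1 * Real.cos x₃)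
    (hv : (v 0) ^ 2 + (v 1) ^ 2 + (v 2) ^ 2 = 1) (hv3 : (v 2) ^ 2 ≠ 1) :
    ![-(v 2) * Real.sin x₃ - α * v 0, v 2 * Real.cos x₃ - α * v 1, -(α * v 2)]
      = ((v 2) ^ 2 * (v 0 * Real.sin x₃ - v 1 * Real.cos x₃) / Real.sqrt (1 - (v 2) ^ 2)) • e₄ v
        + (v 2 * (v 1 * Real.sin x₃ + v 0 * Real.cos x₃) / Real.sqrt (1 - (v 2) ^ 2)) • e₅ v := by
  have h1 : (0:ℝ) < 1 - v 2 ^ 2 := by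
    rcases lt_or_eq_of_le (by nlinarith [sq_nonneg (v 0), sq_nonneg (v 1)] : v 2 ^ 2 ≤ 1) with h | h
    · linarith
    · exact absurd h hv3
  have hs : Real.sqrt (1 - v 2 ^ 2) ^ 2 = 1 - v 2 ^ 2 := Real.sq_sqrt h1.le
  have hsne : Real.sqrt (1 - v 2 ^ 2) ≠ 0 := by positivity
  have hu : v 0 ^ 2 + v 1 ^ 2 = 1 - v 2 ^ 2 := by linarith
  funext i
  fin_cases i
  · simp [e₄, e₅, hα]
    field_simp
    linear_combination ((1 - v 2 ^ 2) * v 2 * Real.sin x₃ + v 2 ^ 3 * Real.sin x₃) * hu + (v 2 * Real.sin x₃ * v 0 ^ 2 - v 2 * Real.sin x₃ - v 2 * v 0 * v 1 * Real.cos x₃) * hs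
  · simp [e₄, e₅, hα]
    field_simp
    linear_combination (-(1 - v 2 ^ 2) * v 2 * Real.cos x₃ - v 2 ^ 3 * Real.cos x₃) * hu + (-(v 2 * Real.cos x₃ * v 1 ^ 2) + v 2 * Real.cos x₃ + v 2 * v 1 * v 0 * Real.sin x₃) * hs
  · simp [e₄, e₅, hα]
    field_simp
    linear_combination (v 2 ^ 2 * v 0 * Real.sin x₃ - v 2 ^ 2 * v 1 * Real.cos x₃) * hs
end

section
/- Let ε > 0 with ε² < 1/2 and t₀ ≥ 0. Suppose u, w : [0, t₀] → ℝ are differentiable with u'(s) = −w(s)·u(s)² and w'(s) = u(s)·(1 − w(s)²) for all s ∈ [0, t₀], that u(0) = ε, w(0) = −ε, w(t₀) = 0, that −ε ≤ w(s) ≤ 0 for all s ∈ [0, t₀], and that u(s)² ≤ 1 for all s ∈ [0, t₀]. Then t₀ ≤ 1/(1 − ε²) and u(t₀) < 3ε. -/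
/-- Helper: monotone on `Icc` from nonnegative derivative within `Icc`. -/
lemma mono_aux {a b : ℝ} {f f' : ℝ → ℝ}
    (hf : ∀ x ∈ Set.Icc a b, HasDerivWithinAt f (f' x) (Set.Icc a b) x)
    (hf'₀ : ∀ x ∈ Set.Icc a b, 0 ≤ f' x) : MonotoneOn f (Set.Icc a b) := by
  apply monotoneOn_of_hasDerivWithinAt_nonneg (f' := f') (convex_Icc a b)
    (fun x hx => (hf x hx).continuousWithinAt)
  · intro x hx
    exact (hf x (interior_subset hx)).mono interior_subset
  · intro x hx
    exact hf'₀ x (interior_subset hx)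

/-- Let `ε > 0` with `ε² < 1/2` and `t₀ ≥ 0`. If on `[0,t₀]` the functions
`u, w` solve `u' = −w·u²`, `w' = u·(1 − w²)`, with `u(0) = ε`, `w(0) = −ε`, `w(t₀) = 0`,
`−ε ≤ w ≤ 0` and `u² ≤ 1` throughout, then `t₀ ≤ 1/(1 − ε²)` and `u(t₀) < 3ε`. -/
theorem statement19 (ε : ℝ) (hε : 0 < ε) (hε2 : ε ^ 2 < 1 / 2)
    (t₀ : ℝ) (ht₀ : 0 ≤ t₀) (u w : ℝ → ℝ)
    (hu : ∀ s ∈ Set.Icc 0 t₀, HasDerivWithinAt u (-w s * u s ^ 2) (Set.Icc 0 t₀) s)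
    (hw : ∀ s ∈ Set.Icc 0 t₀, HasDerivWithinAt w (u s * (1 - w s ^ 2)) (Set.Icc 0 t₀) s)
    (hu0 : u 0 = ε) (hw0 : w 0 = -ε) (hwt : w t₀ = 0)
    (hwb : ∀ s ∈ Set.Icc 0 t₀, -ε ≤ w s ∧ w s ≤ 0)
    (hub : ∀ s ∈ Set.Icc 0 t₀, u s ^ 2 ≤ 1) :
    t₀ ≤ 1 / (1 - ε ^ 2) ∧ u t₀ < 3 * ε := by
  have h0mem : (0:ℝ) ∈ Set.Icc 0 t₀ := ⟨le_refl 0, ht₀⟩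
  have htmem : t₀ ∈ Set.Icc 0 t₀ := ⟨ht₀, le_refl t₀⟩
  -- u is monotone, hence u s ≥ ε
  have humono : MonotoneOn u (Set.Icc 0 t₀) := by
    apply mono_aux hu
    intro x hx
    have := (hwb x hx).2
    nlinarith [sq_nonneg (u x)]
  have hul : ∀ s ∈ Set.Icc 0 t₀, ε ≤ u s := fun s hs => by
    have := humono h0mem hs hs.1
    rwa [hu0] at this
  have hε2' : 1 - ε ^ 2 > 0 := by nlinarith
  -- w s - ε(1-ε²) s is monotone
  have hwm : MonotoneOn (fun s => w s - ε * (1 - ε ^ 2) * s) (Set.Icc 0 t₀) := by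
    apply mono_aux (f' := fun s => u s * (1 - w s ^ 2) - ε * (1 - ε ^ 2))
    · intro x hx
      have := (hw x hx).sub (((hasDerivWithinAt_id x (Set.Icc 0 t₀)).const_mul (ε * (1 - ε ^ 2))))
      simp at this ⊢; exact this
    · intro x hx
      obtain ⟨h1, h2⟩ := hwb x hx
      have h3 := hul x hx
      have hw2 : w x ^ 2 ≤ ε ^ 2 := by nlinarith
      nlinarith
  have key : w 0 - 0 ≤ w t₀ - ε * (1 - ε ^ 2) * t₀ := by
    have := hwm h0mem htmem ht₀
    simpa using this
  rw [hw0, hwt] at key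
  constructor
  · rw [le_div_iff₀ hε2']
    nlinarith
  · -- ε s - u s is monotone
    have hum : MonotoneOn (fun s => ε * s - u s) (Set.Icc 0 t₀) := by
      apply mono_aux (f' := fun s => ε - (-w s * u s ^ 2))
      · intro x hx
        have := ((hasDerivWithinAt_id x (Set.Icc 0 t₀)).const_mul ε).sub (hu x hx)
        simp at this ⊢; exact this
      · intro x hx
        obtain ⟨h1, h2⟩ := hwb x hx
        have h3 := hub x hx
        nlinarith [sq_nonneg (u x)]
    have key2 := hum h0mem htmem ht₀
    simp only [mul_zero, hu0] at key2
    have ht1 : (1 - ε ^ 2) * t₀ ≤ 1 := by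
      have h := mul_le_mul_of_nonneg_left (le_refl (1:ℝ)) hε.le
      nlinarith [key]
    have ht2 : t₀ < 2 := by nlinarith [mul_pos hε2' (lt_of_lt_of_le two_pos (le_refl 2))]
    nlinarith
end
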